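/- Given a semi-skyline augmented filling F, the array ρ(F) obtained by sorting the multiset of entries of each row of F into strictly decreasing order (left-justified) is a reverse semi-standard Young tableau: its rows are strictly decreasing left to right and its columns are weakly decreasing bottom to top. -/

import Mathlib

/-- Indicator `I(x,y) = 1` if `x > y`, else `0`. -/
def ind (x y : ℕ) : ℤ := if y < x then 1 else 0

/-- A semi-skyline augmented filling (SSAF) of a weak composition.
Columns are indexed by positive integers (column 0 is unused and empty);
`shape i` is the number of non-basement cells of column `i`; `entry i j`
is the entry in column `i`, row `j`, with row `0` the basement (entry `i`),
and `entry i j = 0` for cells outside the augmented diagram. -/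
structure SSAF where
  shape : ℕ → ℕ
  entry : ℕ → ℕ → ℕ
  shape_zero : shape 0 = 0
  support : ∃ N, ∀ i, N ≤ i → shape i = 0
  basement : ∀ i, entry i 0 = i
  pos : ∀ i j, 1 ≤ j → j ≤ shape i → 1 ≤ entry i j
  zero_outside : ∀ i j, shape i < j → entry i j = 0
  noDescent : ∀ i j, j + 1 ≤ shape i → entry i (j + 1) ≤ entry i j
  typeA : ∀ i1 i2 j, i1 < i2 → shape i2 ≤ shape i1 → 1 ≤ j → j ≤ shape i2 →
    ind (entry i1 j) (entry i2 j) + ind (entry i2 j) (entry i1 (j - 1))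
      - ind (entry i1 j) (entry i1 (j - 1)) = 1
  typeB : ∀ i1 i2 j, i1 < i2 → shape i1 < shape i2 → j ≤ shape i1 → j + 1 ≤ shape i2 →
    ind (entry i2 (j + 1)) (entry i1 j) + ind (entry i1 j) (entry i2 j)
      - ind (entry i2 (j + 1)) (entry i2 j) = 1

-- If at least k+1 elements of B are ≥ x, then the k-th entry of the decreasing sort of B is ≥ x.
lemma getD_le_of_card (B : Finset ℕ) (k : ℕ) (hk : k < (Finset.sort B (· ≥ ·)).length)
    (x : ℕ) (hx : k + 1 ≤ (B.filter (fun b => x ≤ b)).card) :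
    x ≤ (Finset.sort B (· ≥ ·)).getD k 0 := by
  set l := Finset.sort B (· ≥ ·) with hl
  by_contra hcon
  push_neg at hcon
  have hsub : B.filter (fun b => x ≤ b) ⊆ (l.take k).toFinset := by
    intro b hb
    simp only [Finset.mem_filter] at hb
    have hbl : b ∈ l := (Finset.mem_sort _).2 hb.1
    obtain ⟨m, hm, hbm⟩ := List.mem_iff_getElem.1 hbl
    have hmk : m < k := by
      by_contra hmk
      push_neg at hmk
      have : l[m] ≤ l[k] := by
        rcases eq_or_lt_of_le hmk with h | h
        · subst h; exact le_refl _
        · exact List.pairwise_iff_getElem.1 (Finset.pairwise_sort B (· ≥ ·)) k m hk hm h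
      rw [List.getD_eq_getElem _ _ hk] at hcon
      omega
      -- b = l[m] ≤ l[k] < x ≤ b contradiction
    have : b ∈ l.take k := by
      refine List.mem_iff_getElem.2 ⟨m, ?_, ?_⟩
      · simp [List.length_take]; omega
      · rw [List.getElem_take]; exact hbm
    exact List.mem_toFinset.2 this
  have h1 : ((l.take k).toFinset).card ≤ (l.take k).length := List.toFinset_card_le _
  have h2 : (l.take k).length ≤ k := by simp [List.length_take]
  have := Finset.card_le_card hsub
  omega

lemma card_le_of_getD (B : Finset ℕ) (k : ℕ) (hk : k < (Finset.sort B (· ≥ ·)).length)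
    (x : ℕ) (hx : x ≤ (Finset.sort B (· ≥ ·)).getD k 0) :
    k + 1 ≤ (B.filter (fun b => x ≤ b)).card := by
  set l := Finset.sort B (· ≥ ·) with hl
  have hsub : (l.take (k+1)).toFinset ⊆ B.filter (fun b => x ≤ b) := by
    intro b hb
    obtain ⟨m, hm, hbm⟩ := List.mem_iff_getElem.1 (List.mem_toFinset.1 hb)
    rw [List.length_take] at hm
    have hm' : m < l.length := by omega
    rw [List.getElem_take] at hbm
    have hxk : x ≤ l[k] := by rwa [List.getD_eq_getElem _ _ hk] at hx
    have hle : l[k] ≤ l[m] := by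
      rcases lt_or_ge m k with h | h
      · exact List.pairwise_iff_getElem.1 (Finset.pairwise_sort B (· ≥ ·)) m k hm' hk h
      · have : m = k := by omega
        subst this; exact le_refl _
    refine Finset.mem_filter.2 ⟨?_, ?_⟩
    · exact (Finset.mem_sort _).1 (hbm ▸ List.getElem_mem hm')
    · omega
  have hnd : (l.take (k+1)).Nodup := (Finset.sort_nodup _ _).sublist (List.take_sublist _ _)
  have hcard : ((l.take (k+1)).toFinset).card = k + 1 := by
    rw [List.toFinset_card_of_nodup hnd, List.length_take]; omega
  have := Finset.card_le_card hsub
  omega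

-- distinctness of entries within a row j ≥ 1
lemma row_ne (F : SSAF) (j : ℕ) (hj : 1 ≤ j) (i1 i2 : ℕ) (h12 : i1 < i2)
    (h1 : j ≤ F.shape i1) (h2 : j ≤ F.shape i2) : F.entry i1 j ≠ F.entry i2 j := by
  intro he
  rcases le_or_gt (F.shape i2) (F.shape i1) with h | h
  · have := F.typeA i1 i2 j h12 h hj h2
    rw [he] at this
    simp [ind] at this
  · have := F.typeB i1 i2 j h12 h h1 (by omega)
    rw [he] at this
    simp [ind] at this

/-- Sorting each row of a semi-skyline augmented filling into strictly
decreasing order yields a reverse semi-standard Young tableau: each row list is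
strictly decreasing, successive rows weakly shorten (so the shape is a Young diagram),
and the columns are weakly decreasing from bottom to top. -/
theorem rho_is_reverse_ssyt (F : SSAF) (N : ℕ) (hN : ∀ i, N ≤ i → F.shape i = 0)
    (L : ℕ → List ℕ)
    (hL : ∀ j, L j = Finset.sort
      (((Finset.range N).filter (fun i => j ≤ F.shape i)).image (fun i => F.entry i j)) (· ≥ ·)) :
    ∀ j, 1 ≤ j →
      (L j).Pairwise (· > ·) ∧
      (L (j + 1)).length ≤ (L j).length ∧
      ∀ k, k < (L (j + 1)).length → (L (j + 1)).getD k 0 ≤ (L j).getD k 0 := by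
  intro j hj
  set C : ℕ → Finset ℕ := fun j' => (Finset.range N).filter (fun i => j' ≤ F.shape i) with hC
  have hinj : ∀ j', 1 ≤ j' → ∀ s : Finset ℕ, s ⊆ C j' →
      Set.InjOn (fun i => F.entry i j') s := by
    intro j' hj' s hs i1 hi1 i2 hi2 he
    have h1 : j' ≤ F.shape i1 := (Finset.mem_filter.1 (hs hi1)).2
    have h2 : j' ≤ F.shape i2 := (Finset.mem_filter.1 (hs hi2)).2
    by_contra hne
    rcases lt_or_gt_of_ne hne with h | h
    · exact row_ne F j' hj' i1 i2 h h1 h2 he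
    · exact row_ne F j' hj' i2 i1 h h2 h1 he.symm
  have hcard : ∀ j', 1 ≤ j' →
      ((C j').image (fun i => F.entry i j')).card = (C j').card := fun j' h =>
    Finset.card_image_of_injOn (hinj j' h _ (le_refl _))
  have hlen : ∀ j', 1 ≤ j' → (L j').length = (C j').card := by
    intro j' h
    rw [hL, Finset.length_sort, hcard j' h]
  have hsubC : C (j+1) ⊆ C j := by
    intro i hi
    simp only [hC, Finset.mem_filter] at hi ⊢
    exact ⟨hi.1, by omega⟩
  have hlen2 : (L (j+1)).length ≤ (L j).length := by
    rw [hlen j hj, hlen (j+1) (by omega)]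
    exact Finset.card_le_card hsubC
  refine ⟨?_, hlen2, ?_⟩
  · rw [hL]; exact (Finset.sortedGT_sort _).pairwise
  · intro k hk
    set x := (L (j+1)).getD k 0 with hx
    have hk1 : k < (Finset.sort ((C (j+1)).image (fun i => F.entry i (j+1))) (· ≥ ·)).length := by
      rw [← hL]; exact hk
    have h1 : k + 1 ≤ (((C (j+1)).image (fun i => F.entry i (j+1))).filter
        (fun b => x ≤ b)).card := by
      refine card_le_of_getD _ k hk1 x ?_
      rw [hx, hL]
    rw [Finset.filter_image, Finset.card_image_of_injOn
      (hinj (j+1) (by omega) _ (Finset.filter_subset _ _))] at h1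
    have hsubF : (C (j+1)).filter (fun i => x ≤ F.entry i (j+1)) ⊆
        (C j).filter (fun i => x ≤ F.entry i j) := by
      intro i hi
      rw [Finset.mem_filter] at hi
      have hsh : j + 1 ≤ F.shape i := (Finset.mem_filter.1 hi.1).2
      refine Finset.mem_filter.2 ⟨hsubC hi.1, ?_⟩
      have := F.noDescent i j hsh
      omega
    have h2 : k + 1 ≤ (((C j).image (fun i => F.entry i j)).filter (fun b => x ≤ b)).card := by
      rw [Finset.filter_image, Finset.card_image_of_injOn
        (hinj j hj _ (Finset.filter_subset _ _))]
      exact le_trans h1 (Finset.card_le_card hsubF)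
    have hk2 : k < (Finset.sort ((C j).image (fun i => F.entry i j)) (· ≥ ·)).length := by
      rw [← hL]; omega
    have := getD_le_of_card _ k hk2 x h2
    rwa [← hL] at this
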